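/- For every graph G of maximum degree Δ, there exists a Δ-regular graph H containing G as an induced subgraph, together with a map φ : V(H) → V(G), such that for every vertex v of H, the number of edges in H[N(v)] equals the number of edges in G[N(φ(v))]. -/

import Mathlib

open SimpleGraph

private def pairSet {α : Type*} (K : SimpleGraph α) (v : α) : Set (α × α) :=
  {p : α × α | K.Adj p.1 p.2 ∧ p.1 ∈ K.neighborSet v ∧ p.2 ∈ K.neighborSet v}

/-- Two copies of `G`, with the two copies of each `Δ`-deficient vertex joined. -/
private def double {W : Type*} (G : SimpleGraph W) (Δ : ℕ) : SimpleGraph (W × Bool) where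
  Adj p q := (p.2 = q.2 ∧ G.Adj p.1 q.1) ∨
    (p.1 = q.1 ∧ p.2 ≠ q.2 ∧ (G.neighborSet p.1).ncard < Δ)
  symm := by
    constructor
    rintro ⟨a, b⟩ ⟨c, d⟩ (⟨h1, h2⟩ | ⟨h1, h2, h3⟩)
    · exact Or.inl ⟨h1.symm, h2.symm⟩
    · exact Or.inr ⟨h1.symm, h2.symm, h1 ▸ h3⟩
  loopless := by
    constructor
    rintro ⟨a, b⟩ (⟨_, h⟩ | ⟨_, h, _⟩)
    · exact G.loopless.irrefl a h
    · exact h rfl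

private lemma double_nbr_lt {W : Type*} {G : SimpleGraph W} {Δ : ℕ} {v : W} {i : Bool}
    (h : (G.neighborSet v).ncard < Δ) :
    (double G Δ).neighborSet (v, i) =
      ((fun w => (w, i)) '' G.neighborSet v) ∪ {(v, !i)} := by
  ext ⟨w, j⟩
  constructor
  · rintro (⟨h1, h2⟩ | ⟨h1, h2, _⟩)
    · exact Or.inl ⟨w, h2, congrArg (Prod.mk w) h1⟩
    · refine Or.inr ?_
      cases i <;> cases j <;> simp_all
  · rintro (⟨x, hx, hxe⟩ | he)
    · obtain ⟨rfl, rfl⟩ := Prod.mk.injEq .. ▸ hxe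
      exact Or.inl ⟨rfl, hx⟩
    · obtain ⟨rfl, rfl⟩ : w = v ∧ j = !i := by simpa [Prod.ext_iff] using he
      exact Or.inr ⟨rfl, by cases i <;> simp, h⟩

private lemma double_nbr_ge {W : Type*} {G : SimpleGraph W} {Δ : ℕ} {v : W} {i : Bool}
    (h : ¬ (G.neighborSet v).ncard < Δ) :
    (double G Δ).neighborSet (v, i) = (fun w => (w, i)) '' G.neighborSet v := by
  ext ⟨w, j⟩
  constructor
  · rintro (⟨h1, h2⟩ | ⟨h1, h2, h3⟩)
    · exact ⟨w, h2, congrArg (Prod.mk w) h1⟩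
    · exact absurd h3 h
  · rintro ⟨x, hx, hxe⟩
    obtain ⟨rfl, rfl⟩ := Prod.mk.injEq .. ▸ hxe
    exact Or.inl ⟨rfl, hx⟩

private lemma mk_injective {W : Type*} (i : Bool) :
    Function.Injective (fun w : W => (w, i)) :=
  fun a b h => congrArg Prod.fst h

private lemma double_pairSet {W : Type*} (G : SimpleGraph W) (Δ : ℕ) (p : W × Bool) :
    pairSet (double G Δ) p =
      (Prod.map (fun w => (w, p.2)) (fun w => (w, p.2))) '' pairSet G p.1 := by
  obtain ⟨v, i⟩ := p
  ext ⟨⟨a, b⟩, ⟨c, d⟩⟩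
  constructor
  · rintro ⟨hadj, hm1, hm2⟩
    -- analyze neighbour memberships
    have hm1' : (i = b ∧ G.Adj v a) ∨ (v = a ∧ i ≠ b ∧ (G.neighborSet v).ncard < Δ) := hm1
    have hm2' : (i = d ∧ G.Adj v c) ∨ (v = c ∧ i ≠ d ∧ (G.neighborSet v).ncard < Δ) := hm2
    have hadj' : (b = d ∧ G.Adj a c) ∨ (a = c ∧ b ≠ d ∧ (G.neighborSet a).ncard < Δ) := hadj
    rcases hm1' with ⟨rfl, ha⟩ | ⟨rfl, hb, _⟩
    · rcases hm2' with ⟨rfl, hc⟩ | ⟨rfl, hd, _⟩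
      · rcases hadj' with ⟨_, hac⟩ | ⟨_, hbd, _⟩
        · exact ⟨(a, c), ⟨hac, ha, hc⟩, rfl⟩
        · exact absurd rfl hbd
      · rcases hadj' with ⟨hbd, _⟩ | ⟨hac, _, _⟩
        · exact absurd hbd hd
        · exact absurd hac.symm (G.ne_of_adj ha)
    · rcases hm2' with ⟨rfl, hc⟩ | ⟨rfl, hd, _⟩
      · rcases hadj' with ⟨hbd, _⟩ | ⟨hac, _, _⟩
        · exact absurd hbd.symm hb
        · exact absurd hac (G.ne_of_adj hc)
      · have : b = d := by cases b <;> cases d <;> simp_all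
        rcases hadj' with ⟨_, hac⟩ | ⟨_, hbd, _⟩
        · exact absurd hac (G.loopless.irrefl v)
        · exact absurd this hbd
  · rintro ⟨⟨x, y⟩, ⟨hadj, hx, hy⟩, he⟩
    obtain ⟨⟨rfl, rfl⟩, ⟨rfl, rfl⟩⟩ : (x = a ∧ i = b) ∧ (y = c ∧ i = d) := by
      simpa [Prod.ext_iff] using he
    exact ⟨Or.inl ⟨rfl, hadj⟩, Or.inl ⟨rfl, hx⟩, Or.inl ⟨rfl, hy⟩⟩

private def doubleEmb {W : Type*} (G : SimpleGraph W) (Δ : ℕ) : G ↪g double G Δ where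
  toFun v := (v, false)
  inj' a b h := congrArg Prod.fst h
  map_rel_iff' := by
    intro a b
    constructor
    · rintro (⟨_, h⟩ | ⟨_, h, _⟩)
      · exact h
      · exact absurd rfl h
    · exact fun h => Or.inl ⟨rfl, h⟩

private theorem aux : ∀ (k : ℕ) (Δ : ℕ) {W : Type u} [Fintype W] (G : SimpleGraph W),
    (∀ v, (G.neighborSet v).ncard ≤ Δ) →
    (∀ v, Δ ≤ (G.neighborSet v).ncard + k) →
    ∃ (U : Type u) (_ : Fintype U) (H : SimpleGraph U) (φ : U → W),
      (∀ u, (H.neighborSet u).ncard = Δ) ∧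
      (∃ _ : G ↪g H, True) ∧
      (∀ u, (pairSet H u).ncard = (pairSet G (φ u)).ncard) := by
  intro k
  induction k with
  | zero =>
      intro Δ W _ G h1 h2
      exact ⟨W, inferInstance, G, id, fun v => le_antisymm (h1 v) (by simpa using h2 v),
        ⟨Embedding.refl, trivial⟩, fun u => rfl⟩
  | succ k ih =>
      intro Δ W _ G h1 h2
      have hd1 : ∀ p : W × Bool, ((double G Δ).neighborSet p).ncard ≤ Δ := by
        rintro ⟨v, i⟩
        by_cases h : (G.neighborSet v).ncard < Δ
        · rw [double_nbr_lt h, Set.ncard_union_eq ?_ (Set.toFinite _) (Set.toFinite _),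
            Set.ncard_image_of_injective _ (mk_injective i), Set.ncard_singleton]
          · omega
          · rw [Set.disjoint_singleton_right]
            rintro ⟨x, _, hxe⟩
            have : i = !i := congrArg Prod.snd hxe
            exact absurd this (by cases i <;> decide)
        · rw [double_nbr_ge h, Set.ncard_image_of_injective _ (mk_injective i)]
          exact h1 v
      have hd2 : ∀ p : W × Bool, Δ ≤ ((double G Δ).neighborSet p).ncard + k := by
        rintro ⟨v, i⟩
        by_cases h : (G.neighborSet v).ncard < Δ
        · rw [double_nbr_lt h, Set.ncard_union_eq ?_ (Set.toFinite _) (Set.toFinite _),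
            Set.ncard_image_of_injective _ (mk_injective i), Set.ncard_singleton]
          · have := h2 v; omega
          · rw [Set.disjoint_singleton_right]
            rintro ⟨x, _, hxe⟩
            have : i = !i := congrArg Prod.snd hxe
            exact absurd this (by cases i <;> decide)
        · rw [double_nbr_ge h, Set.ncard_image_of_injective _ (mk_injective i)]
          omega
      obtain ⟨U, instU, H, φ', hreg, ⟨emb, _⟩, hcount⟩ := ih Δ (double G Δ) hd1 hd2
      refine ⟨U, instU, H, fun u => (φ' u).1, hreg, ⟨emb.comp (doubleEmb G Δ), trivial⟩, ?_⟩
      intro u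
      rw [hcount u, double_pairSet,
        Set.ncard_image_of_injective _ (Function.Injective.prodMap
          (mk_injective _) (mk_injective _))]

private lemma comap_nbr {α β : Type*} (f : α ≃ β) (H : SimpleGraph β) (a : α) :
    f '' ((H.comap f).neighborSet a) = H.neighborSet (f a) := by
  ext b
  constructor
  · rintro ⟨x, hx, rfl⟩
    exact hx
  · intro hb
    exact ⟨f.symm b, by simpa [SimpleGraph.comap] using hb, f.apply_symm_apply b⟩

private lemma comap_pairSet {α β : Type*} (f : α ≃ β) (H : SimpleGraph β) (a : α) :
    (Prod.map f f) '' pairSet (H.comap f) a = pairSet H (f a) := by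
  ext ⟨b, c⟩
  constructor
  · rintro ⟨⟨x, y⟩, ⟨h1, h2, h3⟩, he⟩
    obtain ⟨rfl, rfl⟩ : f x = b ∧ f y = c := by simpa [Prod.ext_iff] using he
    exact ⟨h1, h2, h3⟩
  · rintro ⟨h1, h2, h3⟩
    refine ⟨(f.symm b, f.symm c), ?_, by simp⟩
    refine ⟨?_, ?_, ?_⟩
    · simpa using h1
    · simpa [SimpleGraph.mem_neighborSet] using h2
    · simpa [SimpleGraph.mem_neighborSet] using h3

/-- Every graph `G` of maximum degree `Δ` embeds as an induced subgraph into a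
`Δ`-regular graph `H`, with a map `φ : V(H) → V(G)` such that every
neighbourhood of `H` spans exactly as many edges as the corresponding
neighbourhood of `G` (counted here as ordered adjacent pairs). -/
theorem embed_into_regular {V : Type*} [Fintype V] (G : SimpleGraph V)
    (Δ : ℕ) (hΔ : ∀ v, (G.neighborSet v).ncard ≤ Δ) :
    ∃ (U : Type) (_ : Fintype U) (H : SimpleGraph U) (φ : U → V),
      (∀ u : U, (H.neighborSet u).ncard = Δ) ∧
      (∃ _ : G ↪g H, True) ∧
      (∀ u : U,
        {p : U × U | H.Adj p.1 p.2 ∧ p.1 ∈ H.neighborSet u ∧ p.2 ∈ H.neighborSet u}.ncard =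
        {p : V × V | G.Adj p.1 p.2 ∧ p.1 ∈ G.neighborSet (φ u) ∧
          p.2 ∈ G.neighborSet (φ u)}.ncard) := by
  obtain ⟨U, instU, H, φ, hreg, ⟨emb, _⟩, hcount⟩ :=
    aux Δ Δ G hΔ (fun v => Nat.le_add_left Δ _)
  letI := instU
  let f : Fin (Fintype.card U) ≃ U := (Fintype.equivFin U).symm
  have iso : (H.comap (f : Fin (Fintype.card U) → U)) ≃g H :=
    { toEquiv := f, map_rel_iff' := Iff.rfl }
  refine ⟨Fin (Fintype.card U), inferInstance, H.comap f, fun a => φ (f a), ?_, ?_, ?_⟩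
  · intro a
    rw [← hreg (f a), ← comap_nbr f H a, Set.ncard_image_of_injective _ f.injective]
  · exact ⟨iso.symm.toEmbedding.comp emb, trivial⟩
  · intro a
    show (pairSet (H.comap f) a).ncard = (pairSet G (φ (f a))).ncard
    rw [← hcount (f a), ← comap_pairSet f H a,
      Set.ncard_image_of_injective _ (Function.Injective.prodMap f.injective f.injective)]
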